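/- arXiv:2406.07991 — 2 statements merged into one kernel-verified Lean document; each statement's English description precedes it below -/
import Mathlib

section
/- (Asymptotic variance of a linear regression on aggregated targets, Theorem 1.) Let φ : Fin d → Ω_X → ℝ be square-integrable mean-zero test features with invertible covariance matrix Σ, and let ŵ : Fin d → Ω_T → ℝ be square-integrable random regression coefficients (over the training randomness, independent of the test point) whose covariances satisfy cov(ŵ k, ŵ j) = (s/(n−1)) * (Σ⁻¹) k j for all k, j, where s ≥ 0 and n ≥ 2. Then the model variance equals ∫_{Ω_T} ∫_{Ω_X} ( ∑_{k} (ŵ k ω_T − E[ŵ k]) * φ k ω_X )² dμ_X(ω_X) dμ_T(ω_T) = s * d / (n − 1). -/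
open MeasureTheory ProbabilityTheory Matrix

/-- Covariance of two real random variables. -/
noncomputable def cov {Ω : Type*} [MeasurableSpace Ω] (μ : Measure Ω) (X Y : Ω → ℝ) : ℝ :=
  ∫ ω, (X ω - ∫ x, X x ∂μ) * (Y ω - ∫ x, Y x ∂μ) ∂μ

lemma memL2_integrable_mul {Ω : Type*} [MeasurableSpace Ω] {μ : Measure Ω} {f g : Ω → ℝ}
    (hf : MemLp f 2 μ) (hg : MemLp g 2 μ) : Integrable (fun ω => f ω * g ω) μ := by
  rw [← memLp_one_iff_integrable]
  have h := hg.smul (p := 2) (q := 2) (r := 1) hf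
  exact h

/-- Theorem 1 (asymptotic variance of a linear regression on aggregated targets):
if the test features `φ` are square-integrable, mean zero, with invertible covariance
matrix `S`, and the random coefficients `w` (over training randomness) satisfy
`cov (w k) (w j) = (s/(n-1)) * (S⁻¹) k j`, then the model variance equals
`s * d / (n - 1)`. -/
theorem variance_linear_regression_aggregated {ΩT ΩX : Type*}
    [MeasurableSpace ΩT] [MeasurableSpace ΩX]
    (μT : Measure ΩT) (μX : Measure ΩX)
    [IsProbabilityMeasure μT] [IsProbabilityMeasure μX]
    {d : ℕ} (hd : 0 < d) {n : ℕ} (hn : 2 ≤ n) {s : ℝ} (hs : 0 ≤ s)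
    (φ : Fin d → ΩX → ℝ) (hφ : ∀ k, MemLp (φ k) 2 μX)
    (hφ0 : ∀ k, ∫ ω, φ k ω ∂μX = 0)
    (S : Matrix (Fin d) (Fin d) ℝ)
    (hS : ∀ k j, S k j = cov μX (φ k) (φ j))
    (hSinv : IsUnit S.det)
    (w : Fin d → ΩT → ℝ) (hw : ∀ k, MemLp (w k) 2 μT)
    (hwcov : ∀ k j, cov μT (w k) (w j) = (s / ((n : ℝ) - 1)) * S⁻¹ k j) :
    ∫ ωT, ∫ ωX, (∑ k, (w k ωT - ∫ ω, w k ω ∂μT) * φ k ωX) ^ 2 ∂μX ∂μT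
      = s * d / ((n : ℝ) - 1) := by
  have hn1 : (n : ℝ) - 1 ≠ 0 := by
    have : (2 : ℝ) ≤ n := by exact_mod_cast hn
    linarith
  set Ew : Fin d → ℝ := fun k => ∫ ω, w k ω ∂μT with hEw
  have hφint : ∀ k j, Integrable (fun ω => φ k ω * φ j ω) μX :=
    fun k j => memL2_integrable_mul (hφ k) (hφ j)
  have hamem : ∀ k, MemLp (fun ω => w k ω - Ew k) 2 μT :=
    fun k => (hw k).sub (memLp_const _)
  have haint : ∀ k j, Integrable (fun ω => (w k ω - Ew k) * (w j ω - Ew j)) μT :=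
    fun k j => memL2_integrable_mul (hamem k) (hamem j)
  have hcovφ : ∀ k j, S k j = ∫ ω, φ k ω * φ j ω ∂μX := by
    intro k j
    rw [hS, cov, hφ0, hφ0]
    simp
  have hSsymm : ∀ k j, S k j = S j k := by
    intro k j
    rw [hcovφ, hcovφ]
    simp_rw [mul_comm]
  -- inner integral
  have hinner : ∀ ωT, (∫ ωX, (∑ k, (w k ωT - Ew k) * φ k ωX) ^ 2 ∂μX)
      = ∑ k, ∑ j, (w k ωT - Ew k) * (w j ωT - Ew j) * S k j := by
    intro ωT
    have hexp : ∀ ωX, (∑ k, (w k ωT - Ew k) * φ k ωX) ^ 2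
        = ∑ k, ∑ j, (w k ωT - Ew k) * (w j ωT - Ew j) * (φ k ωX * φ j ωX) := by
      intro ωX
      rw [sq, Finset.sum_mul_sum]
      exact Finset.sum_congr rfl fun k _ => Finset.sum_congr rfl fun j _ => by ring
    simp_rw [hexp]
    rw [integral_finset_sum _ (fun k _ => integrable_finset_sum _
      (fun j _ => (hφint k j).const_mul _))]
    refine Finset.sum_congr rfl fun k _ => ?_
    rw [integral_finset_sum _ (fun j _ => (hφint k j).const_mul _)]
    refine Finset.sum_congr rfl fun j _ => ?_
    rw [integral_const_mul, hcovφ]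
  have hinner' : ∀ ωT, (∫ ωX, (∑ k, (w k ωT - ∫ ω, w k ω ∂μT) * φ k ωX) ^ 2 ∂μX)
      = ∑ k, ∑ j, (w k ωT - Ew k) * (w j ωT - Ew j) * S k j := hinner
  simp_rw [hinner']
  rw [integral_finset_sum _ (fun k _ => integrable_finset_sum _
    (fun j _ => (haint k j).mul_const (S k j)))]
  have houter : ∀ k : Fin d, (∫ ωT, ∑ j, (w k ωT - Ew k) * (w j ωT - Ew j) * S k j ∂μT)
      = ∑ j, cov μT (w k) (w j) * S k j := by
    intro k
    rw [integral_finset_sum _ (fun j _ => (haint k j).mul_const (S k j))]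
    refine Finset.sum_congr rfl fun j _ => ?_
    rw [integral_mul_const]
    rfl
  simp_rw [houter, hwcov, mul_assoc, ← Finset.mul_sum]
  have htrace : ∀ k : Fin d, (∑ j, S⁻¹ k j * S k j) = 1 := by
    intro k
    calc (∑ j, S⁻¹ k j * S k j) = ∑ j, S⁻¹ k j * S j k :=
          Finset.sum_congr rfl fun j _ => by rw [hSsymm k j]
      _ = (S⁻¹ * S) k k := (Matrix.mul_apply).symm
      _ = 1 := by rw [Matrix.nonsing_inv_mul S hSinv]; exact Matrix.one_apply_eq k
  simp_rw [htrace]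
  rw [Finset.sum_const, Finset.card_univ, Fintype.card_fin, nsmul_eq_mul, mul_one]
  field_simp
end

section
/- (Theorem 2, alternative form.) Let f : Ω → ℝ and ψ : Ω → ℝ be square-integrable mean-zero random variables with Var(ψ) > 0. Then E[ ( ∑_k w(ψ) k * φ k − f )² ] = Var(f) + Var(ψ) * R²(ψ) − 2 * ( cov(f, ψ) − pcov(f, ψ | φ) ). -/
open MeasureTheory ProbabilityTheory Matrix

private lemma integrable_mul_of_memℒp_two {Ω : Type*} [MeasurableSpace Ω] {μ : Measure Ω}
    {X Y : Ω → ℝ} (hX : MemLp X 2 μ) (hY : MemLp Y 2 μ) :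
    Integrable (fun ω => X ω * Y ω) μ := by
  have h1 : Integrable (fun ω => ((X ω + Y ω) ^ 2 - X ω ^ 2 - Y ω ^ 2) / 2) μ := by
    exact (((hX.add hY).integrable_sq.sub hX.integrable_sq).sub hY.integrable_sq).div_const 2
  refine h1.congr (Filter.Eventually.of_forall fun ω => ?_)
  ring

private lemma cov_eq_integral_mul {Ω : Type*} [MeasurableSpace Ω] {μ : Measure Ω}
    {X Y : Ω → ℝ} (hX0 : ∫ ω, X ω ∂μ = 0) (hY0 : ∫ ω, Y ω ∂μ = 0) :
    cov μ X Y = ∫ ω, X ω * Y ω ∂μ := by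
  simp [cov, hX0, hY0]

/-- Theorem 2, alternative form: the population least-squares predictor of the aggregated
target `ψ`, evaluated as a predictor of `f`, has mean squared error
`Var(f) + Var(ψ) R²(ψ) - 2 (cov(f, ψ) - pcov(f, ψ | φ))`. -/
theorem bias_aggregated_target_alt {Ω : Type*} [MeasurableSpace Ω] (μ : Measure Ω)
    [IsProbabilityMeasure μ] {d : ℕ} (hd : 0 < d)
    (φ : Fin d → Ω → ℝ) (hφ : ∀ k, MemLp (φ k) 2 μ)
    (hφ0 : ∀ k, ∫ ω, φ k ω ∂μ = 0)
    (S : Matrix (Fin d) (Fin d) ℝ)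
    (hS : ∀ k j, S k j = cov μ (φ k) (φ j))
    (hSinv : IsUnit S.det)
    (f : Ω → ℝ) (hf : MemLp f 2 μ) (hf0 : ∫ ω, f ω ∂μ = 0)
    (ψ : Ω → ℝ) (hψ : MemLp ψ 2 μ) (hψ0 : ∫ ω, ψ ω ∂μ = 0)
    (hψvar : 0 < variance ψ μ)
    (cf : Fin d → ℝ) (hcf : ∀ k, cf k = cov μ (φ k) f)
    (cψ : Fin d → ℝ) (hcψ : ∀ k, cψ k = cov μ (φ k) ψ)
    (wψ : Fin d → ℝ) (hwψ : wψ = S⁻¹ *ᵥ cψ)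
    (R2ψ : ℝ) (hR2ψ : R2ψ = (cψ ⬝ᵥ (S⁻¹ *ᵥ cψ)) / variance ψ μ)
    (pcovfψ : ℝ) (hpcovfψ : pcovfψ = cov μ f ψ - cf ⬝ᵥ (S⁻¹ *ᵥ cψ)) :
    ∫ ω, (∑ k, wψ k * φ k ω - f ω) ^ 2 ∂μ
      = variance f μ + variance ψ μ * R2ψ - 2 * (cov μ f ψ - pcovfψ) := by
  -- integrability facts
  have hmulφ : ∀ k j : Fin d, Integrable (fun ω => φ k ω * φ j ω) μ := fun k j =>
    integrable_mul_of_memℒp_two (hφ k) (hφ j)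
  have hmulφf : ∀ k : Fin d, Integrable (fun ω => φ k ω * f ω) μ := fun k =>
    integrable_mul_of_memℒp_two (hφ k) hf
  have hff : Integrable (fun ω => f ω * f ω) μ := integrable_mul_of_memℒp_two hf hf
  -- pointwise expansion
  have hexpand : ∀ ω, (∑ k, wψ k * φ k ω - f ω) ^ 2
      = (∑ k, ∑ j, wψ k * wψ j * (φ k ω * φ j ω))
        - 2 * (∑ k, wψ k * (φ k ω * f ω)) + f ω * f ω := by
    intro ω
    rw [sub_sq, sq, Finset.sum_mul_sum]
    have e1 : (∑ k, ∑ j, (wψ k * φ k ω) * (wψ j * φ j ω))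
        = ∑ k, ∑ j, wψ k * wψ j * (φ k ω * φ j ω) :=
      Finset.sum_congr rfl fun k _ => Finset.sum_congr rfl fun j _ => by ring
    have e2 : (2 * ∑ k, wψ k * φ k ω) * f ω = 2 * ∑ k, wψ k * (φ k ω * f ω) := by
      rw [mul_assoc, Finset.sum_mul]
      congr 1
      exact Finset.sum_congr rfl fun k _ => by ring
    rw [e1, e2, sq]
  -- integrate term by term
  have hint1 : Integrable (fun ω => ∑ k, ∑ j, wψ k * wψ j * (φ k ω * φ j ω)) μ := by
    apply integrable_finset_sum _ fun k _ => integrable_finset_sum _ fun j _ =>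
      (hmulφ k j).const_mul _
  have hint2 : Integrable (fun ω => ∑ k, wψ k * (φ k ω * f ω)) μ :=
    integrable_finset_sum _ fun k _ => (hmulφf k).const_mul _
  have hI : ∫ ω, (∑ k, wψ k * φ k ω - f ω) ^ 2 ∂μ
      = (∑ k, ∑ j, wψ k * wψ j * ∫ ω, φ k ω * φ j ω ∂μ)
        - 2 * (∑ k, wψ k * ∫ ω, φ k ω * f ω ∂μ) + ∫ ω, f ω * f ω ∂μ := by
    have hsub' : Integrable (fun ω => (∑ k, ∑ j, wψ k * wψ j * (φ k ω * φ j ω))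
        - 2 * (∑ k, wψ k * (φ k ω * f ω))) μ := hint1.sub (hint2.const_mul 2)
    simp_rw [hexpand]
    rw [integral_add hsub' hff, integral_sub hint1 (hint2.const_mul 2), integral_finset_sum]
    · congr 2
      · exact Finset.sum_congr rfl fun k _ => by
          rw [integral_finset_sum _ fun j _ => (hmulφ k j).const_mul _]
          exact Finset.sum_congr rfl fun j _ => integral_const_mul _ _
      · rw [integral_const_mul, integral_finset_sum _ fun k _ => (hmulφf k).const_mul _]
        congr 1
        exact Finset.sum_congr rfl fun k _ => integral_const_mul _ _
    · exact fun k _ => integrable_finset_sum _ fun j _ => (hmulφ k j).const_mul _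
  -- identify integrals with covariances and variances
  have hSint : ∀ k j, ∫ ω, φ k ω * φ j ω ∂μ = S k j := fun k j => by
    rw [hS k j, cov_eq_integral_mul (hφ0 k) (hφ0 j)]
  have hcfint : ∀ k, ∫ ω, φ k ω * f ω ∂μ = cf k := fun k => by
    rw [hcf k, cov_eq_integral_mul (hφ0 k) hf0]
  have hfvar : ∫ ω, f ω * f ω ∂μ = variance f μ := by
    rw [variance_eq_sub hf, hf0]
    simp [sq]
  -- linear algebra
  have hScψ : S *ᵥ (S⁻¹ *ᵥ cψ) = cψ := by
    rw [Matrix.mulVec_mulVec, Matrix.mul_nonsing_inv S hSinv, Matrix.one_mulVec]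
  have hquad : (∑ k, ∑ j, wψ k * wψ j * S k j) = cψ ⬝ᵥ (S⁻¹ *ᵥ cψ) := by
    have : (∑ k, ∑ j, wψ k * wψ j * S k j) = wψ ⬝ᵥ (S *ᵥ wψ) := by
      simp only [dotProduct, Matrix.mulVec, dotProduct, Finset.mul_sum]
      exact Finset.sum_congr rfl fun k _ => Finset.sum_congr rfl fun j _ => by ring
    rw [this, hwψ, hScψ, dotProduct_comm]
  have hlin : (∑ k, wψ k * cf k) = cf ⬝ᵥ (S⁻¹ *ᵥ cψ) := by
    rw [hwψ, dotProduct]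
    exact Finset.sum_congr rfl fun k _ => by ring
  -- put things together
  rw [hI]
  simp_rw [hSint, hcfint, hfvar, hquad, hlin, hR2ψ, hpcovfψ]
  rw [mul_div_cancel₀ _ (ne_of_gt hψvar)]
  ring
end
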